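/- Let X ∈ ℝ^{n×p}, y ∈ ℝ^n, λ ≥ 0, μ > 0, and let d ∈ ℝ^n with 0 < d_i < 1/2 for all i. Suppose the block matrix Σ̃_d = [[XᵀX + λI_p, −Xᵀ], [−X, I_n − 2Diag(d)]] is positive semidefinite. Then the function β ↦ (λ/2)‖β‖₂² + ∑_{i=1}^n φ̄(y_i − x_iᵀβ; d_i) is convex on ℝ^p. -/

import Mathlib

open Matrix

/-- The perspective-relaxation loss φ̄(r; d) for parameters μ > 0, d ∈ (0,1/2). -/
noncomputable def phiBar (mu d r : ℝ) : ℝ :=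
  if |r| ≤ 2 * Real.sqrt (mu * d) then (1/2) * r^2
  else if |r| < Real.sqrt (mu / d) then
    (-(d * r^2) + 2 * Real.sqrt (mu * d) * |r| - 2 * mu * d) / (1 - 2*d)
  else mu

open Filter Set

set_option maxHeartbeats 800000 in
lemma psi_convexOn (mu d : ℝ) (hmu : 0 < mu) (hd0 : 0 < d) (hd2 : d < 1/2) :
    ConvexOn ℝ Set.univ (fun r : ℝ => phiBar mu d r + d / (1 - 2*d) * r^2) := by
  have he0 : (0:ℝ) < 1 - 2*d := by linarith
  have hne : (1 - 2*d) ≠ 0 := ne_of_gt he0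
  set δ : ℝ := 2 * Real.sqrt (mu*d) with hδdef
  set t : ℝ := Real.sqrt (mu/d) with htdef
  have hmd : 0 < mu * d := mul_pos hmu hd0
  have hs0 : 0 < Real.sqrt (mu*d) := Real.sqrt_pos.2 hmd
  have hδ0 : 0 < δ := by rw [hδdef]; linarith [hs0]
  have hδsq : δ^2 = 4*(mu*d) := by
    rw [hδdef, mul_pow, Real.sq_sqrt hmd.le]; ring
  have ht0 : 0 < t := Real.sqrt_pos.2 (div_pos hmu hd0)
  have htsq : t^2 = mu/d := Real.sq_sqrt (div_pos hmu hd0).le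
  have hδt : 2*d*t = δ := by
    have h2 : (2*d*t)^2 = δ^2 := by
      rw [hδsq]
      have h5 : (2*d*t)^2 = 4*d^2*t^2 := by ring
      rw [h5, htsq]; field_simp
    have h3 : (2*d*t - δ)*(2*d*t + δ) = 0 := by linear_combination h2
    rcases mul_eq_zero.1 h3 with h4|h4
    · linarith
    · exfalso; nlinarith [mul_pos hd0 ht0]
  have hδt2 : δ * t = 2*mu := by
    have h2 : (δ*t)^2 = (2*mu)^2 := by
      have h5 : (δ*t)^2 = δ^2 * t^2 := by ring
      rw [h5, hδsq, htsq]; field_simp; ring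
    have h3 : (δ*t - 2*mu)*(δ*t + 2*mu) = 0 := by linear_combination h2
    rcases mul_eq_zero.1 h3 with h4|h4
    · linarith
    · exfalso; nlinarith [mul_pos hδ0 ht0]
  have hδlt : δ < t := by
    have h1 : δ^2 < t^2 := by
      rw [hδsq, htsq, lt_div_iff₀ hd0]; nlinarith
    exact lt_of_pow_lt_pow_left₀ 2 ht0.le h1
  set ψ : ℝ → ℝ := fun r : ℝ => phiBar mu d r + d / (1 - 2*d) * r^2 with hψdef
  -- piece equalities
  have hA : ∀ x : ℝ, |x| ≤ δ → ψ x = x^2/(2*(1-2*d)) := by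
    intro x hx
    rw [hψdef]; simp only [phiBar, ← hδdef, ← htdef, if_pos hx]
    field_simp; ring
  have hB : ∀ x : ℝ, δ ≤ |x| → |x| ≤ t → ψ x = (δ*|x| - 2*(mu*d))/(1-2*d) := by
    intro x hx1 hx2
    rw [hψdef]; simp only [phiBar, ← hδdef, ← htdef]
    by_cases h1 : |x| ≤ δ
    · have hxδ : |x| = δ := le_antisymm h1 hx1
      rw [if_pos h1, ← sq_abs x, hxδ, show δ*δ = δ^2 from (sq δ).symm, hδsq]
      field_simp; ring
    · rw [if_neg h1]
      by_cases h2 : |x| < t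
      · rw [if_pos h2, ← sq_abs x]; field_simp; ring
      · have hxt : |x| = t := le_antisymm hx2 (not_lt.1 h2)
        rw [if_neg h2, ← sq_abs x, hxt, htsq, hδt2]
        rw [eq_div_iff hne, add_mul, div_mul_div_comm, mul_comm d mu, mul_div_mul_right _ _ hd0.ne', div_mul_cancel₀ _ hne]; ring
  have hC : ∀ x : ℝ, t ≤ |x| → ψ x = mu + d*x^2/(1-2*d) := by
    intro x hx
    rw [hψdef]; simp only [phiBar, ← hδdef, ← htdef]
    rw [if_neg (by push_neg; linarith), if_neg (by push_neg; exact hx)]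
    ring
  -- the derivative
  set m : ℝ → ℝ := fun r => (max (min r (max δ (2*d*r))) (min (-δ) (2*d*r)))/(1-2*d)
    with hmdef
  have hm_mono : Monotone m := by
    intro r s hrs
    simp only [hmdef]
    have h2d : 2*d*r ≤ 2*d*s := by nlinarith
    apply (div_le_div_iff_of_pos_right he0).2
    exact max_le_max (min_le_min hrs (max_le_max le_rfl h2d)) (min_le_min le_rfl h2d)
  have hψeven : ∀ x : ℝ, ψ (-x) = ψ x := by
    intro x
    rw [hψdef]; simp only [phiBar, abs_neg, neg_sq]
  have hclamp : ∀ a M1 m1 : ℝ, m1 ≤ M1 → max (min a M1) m1 = min (max a m1) M1 := by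
    intro a M1 m1 h
    rcases le_total a m1 with h1|h1
    · rw [min_eq_left (h1.trans h), max_eq_right h1, min_eq_left h]
    · rcases le_total a M1 with h2|h2
      · rw [min_eq_left h2, max_eq_left h1, min_eq_left h2]
      · rw [min_eq_right h2, max_eq_left h, max_eq_left h1, min_eq_right h2]
  have hm_odd : ∀ r : ℝ, m (-r) = - m r := by
    intro r
    simp only [hmdef, mul_neg]
    rw [← neg_div]
    congr 1
    generalize 2*d*r = z
    have e1 : -(max (min r (max δ z)) (min (-δ) z))
        = min (-(min r (max δ z))) (-(min (-δ) z)) := (min_neg_neg _ _).symm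
    have e2 : -(min r (max δ z)) = max (-r) (-(max δ z)) := (max_neg_neg _ _).symm
    have e3 : -(max δ z) = min (-δ) (-z) := (min_neg_neg _ _).symm
    have e4 : -(min (-δ) z) = max δ (-z) := by
      rw [(max_neg_neg _ _).symm, neg_neg]
    rw [e1, e2, e3, e4]
    exact hclamp (-r) (max δ (-z)) (min (-δ) (-z))
      (le_trans (min_le_left _ _) (le_trans (by linarith) (le_max_left _ _)))
  -- derivative on nonneg side
  have hpos : ∀ r : ℝ, 0 ≤ r → HasDerivAt ψ (m r) r := by
    intro r hr
    have habs : |r| = r := abs_of_nonneg hr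
    rcases lt_trichotomy r δ with h|h|h
    · -- inner
      have hmr : m r = r/(1-2*d) := by
        simp only [hmdef]
        congr 1
        rw [min_eq_left (le_trans h.le (le_max_left _ _)),
          max_eq_left (le_trans (min_le_left _ _) (by linarith))]
      have hf : HasDerivAt (fun x : ℝ => x^2/(2*(1-2*d))) (r/(1-2*d)) r := by
        have h6 := (hasDerivAt_pow 2 r).div_const (2*(1-2*d))
        refine h6.congr_deriv ?_
        push_cast; field_simp
      rw [hmr]
      refine hf.congr_of_eventuallyEq ?_
      filter_upwards [Ioo_mem_nhds (by linarith : -δ < r) h] with x hx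
      exact hA x (abs_le.2 ⟨hx.1.le, hx.2.le⟩)
    · -- junction r = δ
      subst h
      have hmr : m δ = δ/(1-2*d) := by
        simp only [hmdef]
        congr 1
        rw [min_eq_left (le_max_left _ _),
          max_eq_left (le_trans (min_le_left _ _) (by linarith))]
      rw [hmr]
      have hfA : HasDerivAt (fun x : ℝ => x^2/(2*(1-2*d))) (δ/(1-2*d)) δ := by
        have h6 := (hasDerivAt_pow 2 δ).div_const (2*(1-2*d))
        refine h6.congr_deriv ?_
        push_cast; field_simp
      have hfB : HasDerivAt (fun x : ℝ => (δ*x - 2*(mu*d))/(1-2*d)) (δ/(1-2*d)) δ := by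
        have h6 := (((hasDerivAt_id δ).const_mul δ).sub_const (2*(mu*d))).div_const (1-2*d)
        refine h6.congr_deriv ?_
        ring
      have hleft : HasDerivWithinAt ψ (δ/(1-2*d)) (Iic δ) δ := by
        refine (hfA.hasDerivWithinAt).congr_of_eventuallyEq ?_
          (hA δ (le_of_eq (abs_of_nonneg hδ0.le)))
        filter_upwards [inter_mem (nhdsWithin_le_nhds (Ioi_mem_nhds (by linarith : -δ < δ)))
          self_mem_nhdsWithin] with x hx
        have h1 : -δ < x := hx.1
        have h2 : x ≤ δ := hx.2
        exact hA x (abs_le.2 ⟨h1.le, h2⟩)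
      have hright : HasDerivWithinAt ψ (δ/(1-2*d)) (Ici δ) δ := by
        refine (hfB.hasDerivWithinAt).congr_of_eventuallyEq ?_ ?_
        · filter_upwards [inter_mem self_mem_nhdsWithin
            (nhdsWithin_le_nhds (Iio_mem_nhds hδlt))] with x hx
          have h1 : δ ≤ x := hx.1
          have h2 : x < t := hx.2
          have hx0 : |x| = x := abs_of_nonneg (le_trans hδ0.le h1)
          rw [hB x (by rw [hx0]; exact h1) (by rw [hx0]; exact h2.le), hx0]
        · rw [hB δ (le_of_eq (abs_of_nonneg hδ0.le).symm)
            (by rw [abs_of_nonneg hδ0.le]; exact hδlt.le), abs_of_nonneg hδ0.le]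
      have h7 := hleft.union hright
      rw [Iic_union_Ici] at h7
      exact hasDerivWithinAt_univ.1 h7
    · rcases lt_trichotomy r t with h2|h2|h2
      · -- middle open
        have hmr : m r = δ/(1-2*d) := by
          simp only [hmdef]
          congr 1
          have h2d : 2*d*r ≤ δ := by nlinarith [mul_lt_mul_of_pos_left h2 (by linarith : (0:ℝ) < 2*d)]
          rw [max_eq_left h2d, min_eq_right h.le,
            max_eq_left (le_trans (min_le_left _ _) (by linarith))]
        rw [hmr]
        have hfB : HasDerivAt (fun x : ℝ => (δ*x - 2*(mu*d))/(1-2*d)) (δ/(1-2*d)) r := by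
          have h6 := (((hasDerivAt_id r).const_mul δ).sub_const (2*(mu*d))).div_const (1-2*d)
          refine h6.congr_deriv ?_
          ring
        refine hfB.congr_of_eventuallyEq ?_
        filter_upwards [Ioo_mem_nhds h h2] with x hx
        have hx0 : |x| = x := abs_of_nonneg (by linarith [hx.1])
        rw [hB x (by rw [hx0]; exact hx.1.le) (by rw [hx0]; exact hx.2.le), hx0]
      · -- junction r = t
        subst h2
        have hmr : m t = δ/(1-2*d) := by
          simp only [hmdef]
          congr 1
          rw [hδt, max_self, min_eq_right h.le,
            max_eq_left (le_trans (min_le_left _ _) (by linarith))]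
        rw [hmr]
        have hfB : HasDerivAt (fun x : ℝ => (δ*x - 2*(mu*d))/(1-2*d)) (δ/(1-2*d)) t := by
          have h6 := (((hasDerivAt_id t).const_mul δ).sub_const (2*(mu*d))).div_const (1-2*d)
          refine h6.congr_deriv ?_
          ring
        have hfC : HasDerivAt (fun x : ℝ => mu + d*x^2/(1-2*d)) (δ/(1-2*d)) t := by
          have h6 := (((hasDerivAt_pow 2 t).const_mul d).div_const (1-2*d)).const_add mu
          refine h6.congr_deriv ?_
          rw [← hδt]; push_cast; field_simp
        have hleft : HasDerivWithinAt ψ (δ/(1-2*d)) (Iic t) t := by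
          refine (hfB.hasDerivWithinAt).congr_of_eventuallyEq ?_ ?_
          · filter_upwards [inter_mem (nhdsWithin_le_nhds (Ioi_mem_nhds h))
              self_mem_nhdsWithin] with x hx
            have h1 : δ < x := hx.1
            have h2 : x ≤ t := hx.2
            have hx0 : |x| = x := abs_of_nonneg (by linarith)
            rw [hB x (by rw [hx0]; exact h1.le) (by rw [hx0]; exact h2), hx0]
          · rw [hB t (by rw [abs_of_nonneg ht0.le]; exact hδlt.le)
              (le_of_eq (abs_of_nonneg ht0.le)), abs_of_nonneg ht0.le]
        have hright : HasDerivWithinAt ψ (δ/(1-2*d)) (Ici t) t := by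
          refine (hfC.hasDerivWithinAt).congr_of_eventuallyEq ?_ ?_
          · filter_upwards [self_mem_nhdsWithin] with x hx
            have h1 : t ≤ x := hx
            exact hC x (by rw [abs_of_nonneg (le_trans ht0.le h1)]; exact h1)
          · exact hC t (le_of_eq (abs_of_nonneg ht0.le).symm)
        have h7 := hleft.union hright
        rw [Iic_union_Ici] at h7
        exact hasDerivWithinAt_univ.1 h7
      · -- outer
        have hmr : m r = 2*d*r/(1-2*d) := by
          simp only [hmdef]
          congr 1
          have hd2r : δ ≤ 2*d*r := by
            rw [← hδt]; nlinarith [mul_lt_mul_of_pos_left h2 (by linarith : (0:ℝ) < 2*d)]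
          rw [max_eq_right hd2r, min_eq_right (by nlinarith : 2*d*r ≤ r),
            max_eq_left (le_trans (min_le_left _ _) (by linarith))]
        rw [hmr]
        have hfC : HasDerivAt (fun x : ℝ => mu + d*x^2/(1-2*d)) (2*d*r/(1-2*d)) r := by
          have h6 := (((hasDerivAt_pow 2 r).const_mul d).div_const (1-2*d)).const_add mu
          refine h6.congr_deriv ?_
          push_cast; field_simp
        refine hfC.congr_of_eventuallyEq ?_
        filter_upwards [Ioi_mem_nhds h2] with x hx
        have h1 : t < x := hx
        exact hC x (by rw [abs_of_nonneg (by linarith)]; exact h1.le)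
  have hder : ∀ r : ℝ, HasDerivAt ψ (m r) r := by
    intro r
    rcases le_or_gt 0 r with h|h
    · exact hpos r h
    · have h1 := hpos (-r) (by linarith)
      have h2 : HasDerivAt (fun x : ℝ => ψ (-x)) (m (-r) * (-1)) r :=
        h1.comp r (hasDerivAt_neg r)
      have h3 : (fun x : ℝ => ψ (-x)) = ψ := funext hψeven
      rw [h3] at h2
      have h4 : m (-r) * (-1) = m r := by rw [hm_odd]; ring
      rwa [h4] at h2
  have hdiff : Differentiable ℝ ψ := fun r => (hder r).differentiableAt
  have hderiv_eq : deriv ψ = m := funext fun r => (hder r).deriv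
  exact Monotone.convexOn_univ_of_deriv hdiff (by rw [hderiv_eq]; exact hm_mono)

/-- if Σ̃_d is positive semidefinite and 0 < d_i < 1/2, then
β ↦ (λ/2)‖β‖₂² + ∑ᵢ φ̄(yᵢ − xᵢᵀβ; dᵢ) is convex on ℝ^p. -/
theorem stmt_5 (n p : ℕ) (X : Matrix (Fin n) (Fin p) ℝ) (y : Fin n → ℝ)
    (lam mu : ℝ) (hlam : 0 ≤ lam) (hmu : 0 < mu)
    (d : Fin n → ℝ) (hd : ∀ i, 0 < d i ∧ d i < 1/2)
    (hpsd : (Matrix.fromBlocks (Xᵀ * X + lam • (1 : Matrix (Fin p) (Fin p) ℝ))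
      (-Xᵀ) (-X)
      ((1 : Matrix (Fin n) (Fin n) ℝ) - (2:ℝ) • Matrix.diagonal d)).PosSemidef) :
    ConvexOn ℝ Set.univ
      (fun β : Fin p → ℝ =>
        lam/2 * ∑ j, (β j)^2 + ∑ i, phiBar mu (d i) (y i - ∑ j, X i j * β j)) := by
  have hne : ∀ i, (1 - 2*d i) ≠ 0 := fun i => by
    have h1 := (hd i).1; have h2 := (hd i).2; intro h; nlinarith
  have key : ∀ v : Fin p → ℝ,
      2 * ∑ i, d i/(1-2*d i) * (∑ j, X i j * v j)^2 ≤ lam * ∑ j, (v j)^2 := by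
    intro v
    set G : Fin n → ℝ := X *ᵥ v with hG
    set r : Fin n → ℝ := fun i => G i / (1 - 2*d i) with hr
    have h := hpsd.dotProduct_mulVec_nonneg (Sum.elim v r)
    rw [Matrix.fromBlocks_mulVec] at h
    simp only [Sum.elim_comp_inl, Sum.elim_comp_inr] at h
    rw [show star (Sum.elim v r) = Sum.elim v r from by simp [star_trivial]] at h
    rw [sumElim_dotProduct_sumElim] at h
    rw [Matrix.sub_mulVec, Matrix.neg_mulVec, Matrix.neg_mulVec,
      Matrix.smul_mulVec, Matrix.one_mulVec,
      Matrix.add_mulVec, Matrix.smul_mulVec, Matrix.one_mulVec,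
      ← Matrix.mulVec_mulVec, ← hG] at h
    simp only [dotProduct_add, dotProduct_sub, dotProduct_neg,
      dotProduct_smul] at h
    have hXG : v ⬝ᵥ Xᵀ *ᵥ G = G ⬝ᵥ G := by
      rw [Matrix.dotProduct_mulVec, Matrix.vecMul_transpose, ← hG]
    have hXr : v ⬝ᵥ Xᵀ *ᵥ r = G ⬝ᵥ r := by
      rw [Matrix.dotProduct_mulVec, Matrix.vecMul_transpose, ← hG]
    rw [hXG, hXr] at h
    simp only [dotProduct, smul_eq_mul, Pi.smul_apply] at h
    have hdiag : ∀ i, (Matrix.diagonal d *ᵥ r) i = d i * r i :=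
      fun i => Matrix.mulVec_diagonal d r i
    simp only [hdiag] at h
    have hterm : ∀ i ∈ (Finset.univ : Finset (Fin n)),
        G i * G i - G i * r i - r i * G i + (r i * r i - 2 * (r i * (d i * r i)))
        = -(2*(d i/(1-2*d i)) * (G i)^2) := by
      intro i _
      have h0 : (1 - 2*d i) ≠ 0 := hne i
      simp only [hr]
      field_simp
      ring
    have hsum0 := Finset.sum_congr rfl hterm
    have hsum1 : ∑ i, (G i*G i - G i*r i - r i*G i + (r i*r i - 2*(r i*(d i*r i))))
        = (∑ i, G i*G i) - (∑ i, G i*r i) - (∑ i, r i*G i)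
          + ((∑ i, r i*r i) - 2*(∑ i, r i*(d i*r i))) := by
      simp [Finset.sum_sub_distrib, Finset.sum_add_distrib, Finset.mul_sum]
    have hsum2 : ∑ i, (-(2*(d i/(1-2*d i)) * (G i)^2))
        = -(2 * ∑ i, d i/(1-2*d i) * (G i)^2) := by
      rw [Finset.mul_sum, ← Finset.sum_neg_distrib]
      exact Finset.sum_congr rfl fun i _ => by ring
    rw [hsum1, hsum2] at hsum0
    have hGi : ∀ i, G i = ∑ j, X i j * v j := fun i => rfl
    have hvj : ∑ i : Fin p, v i * v i = ∑ j, (v j)^2 := by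
      apply Finset.sum_congr rfl; intro j _; ring
    have hfin : 2 * ∑ i, d i/(1-2*d i) * (G i)^2 ≤ lam * ∑ j, (v j)^2 := by
      rw [← hvj]; linarith [h, hsum0]
    have hgoal : ∑ i, d i/(1-2*d i) * (∑ j, X i j * v j)^2
        = ∑ i, d i/(1-2*d i) * (G i)^2 := by
      apply Finset.sum_congr rfl; intro i _; rw [hGi i]
    rw [hgoal]
    exact hfin
  refine ⟨convex_univ, ?_⟩
  intro x _ z _ a b ha hb hab
  simp only [Pi.add_apply, Pi.smul_apply, smul_eq_mul]
  have hb1 : b = 1 - a := by linarith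
  -- affine combination inside
  have haff : ∀ i, y i - ∑ j, X i j * (a * x j + b * z j)
      = a * (y i - ∑ j, X i j * x j) + b * (y i - ∑ j, X i j * z j) := by
    intro i
    have h1 : ∑ j, X i j * (a * x j + b * z j)
        = a * ∑ j, X i j * x j + b * ∑ j, X i j * z j := by
      rw [Finset.mul_sum, Finset.mul_sum, ← Finset.sum_add_distrib]
      exact Finset.sum_congr rfl fun j _ => by ring
    rw [h1, hb1]; ring
  -- per-i convexity inequality for phiBar
  have hphi : ∀ i ∈ (Finset.univ : Finset (Fin n)),
      phiBar mu (d i) (y i - ∑ j, X i j * (a * x j + b * z j))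
      ≤ a * phiBar mu (d i) (y i - ∑ j, X i j * x j)
        + b * phiBar mu (d i) (y i - ∑ j, X i j * z j)
        + a*b*(d i/(1-2*d i) * (∑ j, X i j * (x j - z j))^2) := by
    intro i _
    have hdi1 := (hd i).1
    have hdi2 := (hd i).2
    have hcv := psi_convexOn mu (d i) hmu hdi1 hdi2
    set gx : ℝ := y i - ∑ j, X i j * x j with hgx
    set gz : ℝ := y i - ∑ j, X i j * z j with hgz
    have h2 := hcv.2 (Set.mem_univ gx) (Set.mem_univ gz) ha hb hab
    simp only [smul_eq_mul] at h2
    have hdiff : ∑ j, X i j * (x j - z j) = gz - gx := by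
      rw [hgx, hgz]
      rw [show ∑ j, X i j * (x j - z j) = ∑ j, (X i j * x j - X i j * z j) from
        Finset.sum_congr rfl fun j _ => by ring, Finset.sum_sub_distrib]
      ring
    rw [haff i, ← hgx, ← hgz, hdiff]
    have hc0 : 0 ≤ d i/(1-2*d i) := div_nonneg hdi1.le (by linarith)
    have hident : a*gx^2 + b*gz^2 - (a*gx + b*gz)^2 = a*b*(gz - gx)^2 := by
      rw [hb1]; ring
    nlinarith [h2, hident, hc0, mul_le_mul_of_nonneg_left (le_of_eq hident) hc0]
  have hsumphi := Finset.sum_le_sum hphi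
  -- distribute sums on the right of hsumphi
  have hdist : ∑ i, (a * phiBar mu (d i) (y i - ∑ j, X i j * x j)
      + b * phiBar mu (d i) (y i - ∑ j, X i j * z j)
      + a*b*(d i/(1-2*d i) * (∑ j, X i j * (x j - z j))^2))
      = a * ∑ i, phiBar mu (d i) (y i - ∑ j, X i j * x j)
        + b * ∑ i, phiBar mu (d i) (y i - ∑ j, X i j * z j)
        + a*b* ∑ i, d i/(1-2*d i) * (∑ j, X i j * (x j - z j))^2 := by
    rw [Finset.sum_add_distrib, Finset.sum_add_distrib,
      ← Finset.mul_sum, ← Finset.mul_sum, ← Finset.mul_sum]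
  rw [hdist] at hsumphi
  -- the lambda part
  have hlamid : ∑ j, (a * x j + b * z j)^2
      = a * ∑ j, (x j)^2 + b * ∑ j, (z j)^2 - a*b*∑ j, (x j - z j)^2 := by
    rw [Finset.mul_sum, Finset.mul_sum, Finset.mul_sum, ← Finset.sum_add_distrib,
      ← Finset.sum_sub_distrib]
    refine Finset.sum_congr rfl fun j _ => ?_
    rw [hb1]; ring
  have hkey := key (fun j => x j - z j)
  have hprod : 0 ≤ a*b*(lam * ∑ j, (x j - z j)^2
      - 2 * ∑ i, d i/(1-2*d i) * (∑ j, X i j * (x j - z j))^2) :=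
    mul_nonneg (mul_nonneg ha hb) (sub_nonneg.2 hkey)
  -- rewrite the phiBar sum in the goal via haff
  have hgoalsum : ∑ i, phiBar mu (d i) (y i - ∑ j, X i j * (a * x j + b * z j))
      = ∑ i, phiBar mu (d i) (a * (y i - ∑ j, X i j * x j)
          + b * (y i - ∑ j, X i j * z j)) :=
    Finset.sum_congr rfl fun i _ => by rw [haff i]
  rw [hgoalsum, hlamid]
  -- now conclude by linear arithmetic
  have hsum2 : ∑ i, phiBar mu (d i) (a * (y i - ∑ j, X i j * x j)
      + b * (y i - ∑ j, X i j * z j))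
      ≤ a * ∑ i, phiBar mu (d i) (y i - ∑ j, X i j * x j)
        + b * ∑ i, phiBar mu (d i) (y i - ∑ j, X i j * z j)
        + a*b* ∑ i, d i/(1-2*d i) * (∑ j, X i j * (x j - z j))^2 := by
    refine le_trans (le_of_eq ?_) hsumphi
    exact Finset.sum_congr rfl fun i _ => by rw [haff i]
  nlinarith [hsum2, hprod]
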